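/- arXiv:1708.04235 — 2 statements merged into one kernel-verified Lean document; each statement's English description precedes it below -/
import Mathlib

section
/- Let f ∈ AC¹ and let x ∈ (−1,1) be rational and regular for a strictly increasing sequence (n_j) of positive integers. If O(f,x) ≠ 0 and E(f,x) ≠ 0 then liminf_{j→∞} n_j |B_{n_j}(f,x) − f(x)| > 0. -/
open Filter Set MeasureTheory

noncomputable section

/-- Equally spaced nodes `x_{k,n} = 2k/n - 1`. -/
def node (n k : ℕ) : ℝ := 2 * k / n - 1

/-- `x` is one of the nodes `x_{0,n}, …, x_{n,n}`. -/
def isNode (n : ℕ) (x : ℝ) : Prop := ∃ k ≤ n, x = node n k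

/-- Denominator of Berrut's interpolant. -/
def Dden (n : ℕ) (x : ℝ) : ℝ :=
  ∑ k ∈ Finset.range (n + 1), (-1 : ℝ) ^ k / (x - node n k)

/-- Numerator of Berrut's interpolant. -/
def Nnum (f : ℝ → ℝ) (n : ℕ) (x : ℝ) : ℝ :=
  ∑ k ∈ Finset.range (n + 1), (-1 : ℝ) ^ k * f (node n k) / (x - node n k)

open Classical in
/-- Berrut's barycentric interpolant. -/
def berrut (f : ℝ → ℝ) (n : ℕ) (x : ℝ) : ℝ :=
  if isNode n x then f x else Nnum f n x / Dden n x

/-- The odd bias function `O(f,x)`. -/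
def Ofun (f : ℝ → ℝ) (x : ℝ) : ℝ :=
  (f x - f 1) / (2 * (x - 1)) - (f x - f (-1)) / (2 * (x + 1))

/-- The even bias function `E(f,x)`. -/
def Efun (f : ℝ → ℝ) (x : ℝ) : ℝ :=
  (f 1 - f x) / (2 * (x - 1)) + (f (-1) - f x) / (2 * (x + 1))

/-- `f` is differentiable on `[-1,1]` with absolutely continuous derivative. -/
def AC1 (f : ℝ → ℝ) : Prop :=
  ∃ f' : ℝ → ℝ,
    (∀ x ∈ Set.Icc (-1 : ℝ) 1, HasDerivWithinAt f (f' x) (Set.Icc (-1 : ℝ) 1) x) ∧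
    ∃ g : ℝ → ℝ, IntervalIntegrable g volume (-1) 1 ∧
      ∀ x ∈ Set.Icc (-1 : ℝ) 1, f' x = f' (-1) + ∫ t in (-1 : ℝ)..x, g t

/-- `x` is regular for the sequence `n j`: eventually never a node. -/
def Regular (n : ℕ → ℕ) (x : ℝ) : Prop := ∃ j₀, ∀ j ≥ j₀, ¬ isNode (n j) x

/-- The function `A(x) = Σ (-1)^k (4k+2)/((2k+1)^2 - x)`. -/
def Afun (x : ℝ) : ℝ := ∑' k : ℕ, (-1 : ℝ) ^ k * (4 * k + 2) / ((2 * k + 1) ^ 2 - x)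

/-- `ι_n(x) = ⌊n(x+1)/2⌋`. -/
def iota (n : ℕ) (x : ℝ) : ℤ := ⌊(n : ℝ) * (x + 1) / 2⌋

/-- `ρ_n(x) = n(x - x_{ι_n(x),n}) - 1 = n(x+1) - 2 ι_n(x) - 1`. -/
def rho (n : ℕ) (x : ℝ) : ℝ := (n : ℝ) * (x + 1) - 2 * (iota n x : ℝ) - 1

open Classical in
/-- The de-biased numerator `Δ_n(f,x)`. -/
def Delta (f : ℝ → ℝ) (n : ℕ) (x : ℝ) : ℝ :=
  if isNode n x then 0 else
    (f (-1) - f x) / (2 * (x + 1)) + (-1 : ℝ) ^ n * (f 1 - f x) / (2 * (x - 1)) +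
      (1 / (n : ℝ)) * ∑ k ∈ Finset.Ioo 0 n, (-1 : ℝ) ^ k * (f (node n k) - f x) / (x - node n k)

end

section Aux

theorem abel_sum (g : ℕ → ℝ) (n : ℕ) :
    ∑ k ∈ Finset.range (n+1), (-1:ℝ)^k * g k
      = (g 0 + (-1:ℝ)^n * g n)/2
        + (1/2) * ∑ k ∈ Finset.range n, (-1:ℝ)^k * (g k - g (k+1)) := by
  induction n with
  | zero => simp
  | succ n ih =>
    rw [Finset.sum_range_succ, ih, Finset.sum_range_succ, pow_succ]
    ring

theorem alt_sum_bounds (c : ℕ → ℝ) (m : ℕ) (h0 : 0 < c 0)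
    (hmono : ∀ i, i < m → c i < c (i+1)) :
    (0 < ∑ k ∈ Finset.range (m+1), (-1:ℝ)^(m-k) * c k ∧
      ∑ k ∈ Finset.range (m+1), (-1:ℝ)^(m-k) * c k ≤ c m) ∧
      c m - c (m-1) ≤ ∑ k ∈ Finset.range (m+1), (-1:ℝ)^(m-k) * c k := by
  induction m with
  | zero => simp [h0, h0.le]
  | succ m ih =>
    obtain ⟨⟨hpos, hle⟩, _⟩ := ih (fun i hi => hmono i (Nat.lt_succ_of_lt hi))
    have key : ∑ k ∈ Finset.range (m+2), (-1:ℝ)^(m+1-k) * c k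
        = c (m+1) - ∑ k ∈ Finset.range (m+1), (-1:ℝ)^(m-k) * c k := by
      rw [Finset.sum_range_succ]
      have h1 : ∀ k ∈ Finset.range (m+1), (-1:ℝ)^(m+1-k) * c k = -((-1:ℝ)^(m-k) * c k) := by
        intro k hk
        rw [Nat.succ_sub (Nat.lt_succ_iff.mp (Finset.mem_range.mp hk)), pow_succ]
        ring
      rw [Finset.sum_congr rfl h1, Finset.sum_neg_distrib, Nat.sub_self, pow_zero, one_mul]
      ring
    have hcc : c m < c (m+1) := hmono m (Nat.lt_succ_self m)
    refine ⟨⟨?_, ?_⟩, ?_⟩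
    · rw [key]; linarith
    · rw [key]; linarith
    · rw [key]; simp only [Nat.add_sub_cancel]; linarith

theorem node_zero {n : ℕ} (hn : 0 < n) : node n 0 = -1 := by simp [node]

theorem node_last {n : ℕ} (hn : 0 < n) : node n n = 1 := by
  have h : (n:ℝ) ≠ 0 := Nat.cast_ne_zero.mpr hn.ne'
  simp only [node]
  rw [mul_div_assoc, div_self h]
  norm_num

theorem node_succ_sub {n : ℕ} (hn : 0 < n) (k : ℕ) :
    node n (k+1) = node n k + 2 / n := by
  have h : (n:ℝ) ≠ 0 := Nat.cast_ne_zero.mpr hn.ne'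
  simp only [node]
  push_cast
  field_simp
  ring

theorem node_lt_node {n : ℕ} (hn : 0 < n) {j k : ℕ} (h : j < k) : node n j < node n k := by
  have h0 : (0:ℝ) < n := Nat.cast_pos.mpr hn
  have : (j:ℝ) < k := by exact_mod_cast h
  simp only [node]
  have h2 : 2*(j:ℝ)/n < 2*(k:ℝ)/n := by
    rw [div_lt_div_iff₀ h0 h0]; nlinarith
  linarith

theorem node_mem {n : ℕ} (hn : 0 < n) {k : ℕ} (hk : k ≤ n) : node n k ∈ Icc (-1:ℝ) 1 := by
  constructor
  · rcases Nat.eq_zero_or_pos k with h | h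
    · subst h; rw [node_zero hn]
    · exact le_of_lt (by rw [← node_zero hn]; exact node_lt_node hn h)
  · rcases eq_or_lt_of_le hk with h | h
    · subst h; rw [node_last hn]
    · exact le_of_lt (by rw [← node_last hn]; exact node_lt_node hn h)

theorem not_node {n : ℕ} {x : ℝ} (hnn : ¬ isNode n x) {k : ℕ} (hk : k ≤ n) :
    x - node n k ≠ 0 := by
  intro h
  exact hnn ⟨k, hk, by linarith [sub_eq_zero.mp h]⟩

theorem exists_mid {n : ℕ} (hn : 0 < n) {x : ℝ} (hx : x ∈ Set.Ioo (-1:ℝ) 1)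
    (hnn : ¬ isNode n x) :
    ∃ m : ℕ, m < n ∧ (∀ k ≤ m, node n k < x) ∧ (∀ k, m < k → x < node n k) := by
  have h0 : (0:ℝ) < n := Nat.cast_pos.mpr hn
  set y : ℝ := (n:ℝ) * (x + 1) / 2 with hy
  have hy0 : 0 < y := by
    have : 0 < x + 1 := by linarith [hx.1]
    positivity
  have hyn : y < n := by
    rw [hy, div_lt_iff₀ (by norm_num : (0:ℝ) < 2)]
    nlinarith [hx.2]
  -- key equivalence : node n k < x ↔ (k:ℝ) < y
  have hkey : ∀ k : ℕ, (node n k < x ↔ (k:ℝ) < y) := by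
    intro k
    simp only [node, hy]
    rw [div_sub_one h0.ne', div_lt_iff₀ h0, lt_div_iff₀ (by norm_num : (0:ℝ) < 2)]
    constructor <;> intro h <;> nlinarith
  have hkeq : ∀ k : ℕ, k ≤ n → y ≠ (k:ℝ) := by
    intro k hk h
    apply hnn
    refine ⟨k, hk, ?_⟩
    have : (n:ℝ) * (x+1) = 2 * k := by
      rw [hy, div_eq_iff (by norm_num : (2:ℝ) ≠ 0)] at h
      linarith
    simp only [node]
    rw [eq_sub_iff_add_eq, eq_div_iff h0.ne']
    linarith
  set m : ℕ := ⌊y⌋.toNat with hm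
  have hfl0 : (0:ℤ) ≤ ⌊y⌋ := Int.floor_nonneg.mpr hy0.le
  have hmr : (m:ℝ) = (⌊y⌋ : ℝ) := by
    rw [hm]; exact_mod_cast congrArg (Int.cast : ℤ → ℝ) (Int.toNat_of_nonneg hfl0)
  have hmy : (m:ℝ) ≤ y := by rw [hmr]; exact Int.floor_le y
  have hym : y < (m:ℝ) + 1 := by rw [hmr]; exact_mod_cast Int.lt_floor_add_one y
  have hmn : m < n := by
    by_contra h
    push_neg at h
    have : (n:ℝ) ≤ (m:ℝ) := by exact_mod_cast h
    linarith
  have hmy' : (m:ℝ) < y := lt_of_le_of_ne hmy (fun h => hkeq m hmn.le h.symm)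
  refine ⟨m, hmn, ?_, ?_⟩
  · intro k hk
    rw [hkey]
    have : (k:ℝ) ≤ (m:ℝ) := by exact_mod_cast hk
    linarith
  · intro k hk
    rcases le_or_gt k n with hkn | hkn
    · have h1 : ¬ node n k < x := by
        rw [hkey]
        push_neg
        have : (m:ℝ) + 1 ≤ (k:ℝ) := by exact_mod_cast hk
        linarith
      push_neg at h1
      exact lt_of_le_of_ne h1 (fun h => (not_node hnn hkn) (by linarith))
    · have : 1 < node n k := by rw [← node_last hn]; exact node_lt_node hn hkn
      linarith [hx.2]

theorem gap {n : ℕ} (hn : 0 < n) {x : ℝ} {r : ℚ} (hxr : x = (r:ℝ))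
    (hnn : ¬ isNode n x) {k : ℕ} (hk : k ≤ n) :
    1 / ((r.den : ℝ) * n) ≤ |x - node n k| := by
  have h0 : (0:ℝ) < n := Nat.cast_pos.mpr hn
  have hq0 : (0:ℝ) < (r.den : ℝ) := by exact_mod_cast r.pos
  set z : ℤ := (r.num + r.den) * n - 2 * k * r.den with hz
  have hzval : (x - node n k) * ((r.den:ℝ) * n) = (z:ℝ) := by
    subst hxr
    have hrd : (r:ℝ) = (r.num:ℝ)/(r.den:ℝ) := by rw [Rat.cast_def]
    simp only [node, hz]
    push_cast
    rw [hrd]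
    field_simp
    ring
  have hz0 : z ≠ 0 := by
    intro h
    apply not_node hnn hk
    have : (x - node n k) * ((r.den:ℝ) * n) = 0 := by rw [hzval, h]; simp
    rcases mul_eq_zero.mp this with h' | h'
    · exact h'
    · exact absurd h' (by positivity)
  have h1z : (1:ℝ) ≤ |(z:ℝ)| := by
    have : (1:ℤ) ≤ |z| := Int.one_le_abs hz0
    calc (1:ℝ) ≤ (|z| : ℤ) := by exact_mod_cast this
    _ = |(z:ℝ)| := by push_cast; ring
  have habs : |x - node n k| * ((r.den:ℝ) * n) = |(z:ℝ)| := by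
    rw [← hzval, abs_mul, abs_of_pos (by positivity : (0:ℝ) < (r.den:ℝ)*n)]
  rw [div_le_iff₀ (by positivity)]
  calc (1:ℝ) ≤ |(z:ℝ)| := h1z
  _ = |x - node n k| * ((r.den:ℝ)*n) := habs.symm

theorem key_frac0 {nr δ : ℝ} (h0 : 0 < nr) (hδ0 : 0 < δ) (hδle : δ < 2/nr) :
    nr/4 ≤ 1/δ := by
  have hn2 : nr*(2/nr) = 2 := by field_simp
  rw [le_div_iff₀ hδ0]
  nlinarith

theorem key_frac {nr δ : ℝ} (h0 : 0 < nr) (hδ0 : 0 < δ) (hδlt : δ < 2/nr) :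
    nr/4 ≤ 1/δ - 1/(δ + 2/nr) := by
  have h2n : (0:ℝ) < 2/nr := by positivity
  have hδn : (0:ℝ) < δ + 2/nr := by positivity
  have h1 : δ * (δ + 2/nr) ≤ (2/nr) * (2/nr + 2/nr) := by nlinarith
  have h2 : nr/4 * ((2/nr) * (2/nr + 2/nr)) = 2/nr := by field_simp; ring
  have hmain : nr/4 * (δ * (δ + 2/nr)) ≤ 2/nr := by nlinarith
  have expand : 1/δ - 1/(δ+2/nr) = ((δ+2/nr) - δ)/(δ*(δ+2/nr)) := by field_simp
  have e : (δ+2/nr) - δ = 2/nr := by ring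
  rw [expand, e, le_div_iff₀ (by positivity)]
  linarith

theorem inv_le_qn {q nr t : ℝ} (hqn : 0 < q * nr) (ht : 0 < t) (h : 1/(q*nr) ≤ t) :
    1/t ≤ q * nr := by
  rw [div_le_iff₀ ht]
  rw [div_le_iff₀ hqn] at h
  nlinarith

theorem Dden_bounds {n : ℕ} (hn : 0 < n) {x : ℝ} (hx : x ∈ Set.Ioo (-1:ℝ) 1)
    (hnn : ¬ isNode n x) {q : ℝ} (hq : 0 < q)
    (hgap : ∀ k ≤ n, 1/(q * n) ≤ |x - node n k|) :
    Dden n x ≠ 0 ∧ (n:ℝ)/4 ≤ |Dden n x| ∧ |Dden n x| ≤ 2*(q*(n:ℝ)) := by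
  have h0 : (0:ℝ) < n := Nat.cast_pos.mpr hn
  have hqn : (0:ℝ) < q * n := by positivity
  have h2n : (0:ℝ) < 2 / n := by positivity
  obtain ⟨m, hmn, hbelow, habove⟩ := exists_mid hn hx hnn
  set c : ℕ → ℝ := fun k => 1/(x - node n k) with hc
  have hsub : ∀ k, k ≤ m → 0 < x - node n k := fun k hk => sub_pos.mpr (hbelow k hk)
  have hcpos : ∀ k, k ≤ m → 0 < c k := fun k hk => by
    simp only [hc]; exact one_div_pos.mpr (hsub k hk)
  have hcmono : ∀ i, i < m → c i < c (i+1) := by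
    intro i hi
    simp only [hc]
    apply one_div_lt_one_div_of_lt (hsub (i+1) hi)
    have := node_lt_node hn (Nat.lt_succ_self i)
    linarith
  obtain ⟨⟨hS1pos, hS1le⟩, hS1ge⟩ := alt_sum_bounds c m (hcpos 0 (Nat.zero_le m)) hcmono
  set S1 := ∑ k ∈ Finset.range (m+1), (-1:ℝ)^(m-k) * c k with hS1
  -- second block
  set K := n - m with hK
  have hK1 : 1 ≤ K := by omega
  set d : ℕ → ℝ := fun j => 1/(node n (m+1+j) - x) with hd
  have hdsub : ∀ j, 0 < node n (m+1+j) - x := fun j =>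
    sub_pos.mpr (habove (m+1+j) (by omega))
  have hdpos : ∀ j, 0 < d j := fun j => one_div_pos.mpr (hdsub j)
  set c2 : ℕ → ℝ := fun j => d (K-1-j) with hc2
  have hc2mono : ∀ i, i < K-1 → c2 i < c2 (i+1) := by
    intro i hi
    simp only [hc2, hd]
    apply one_div_lt_one_div_of_lt (hdsub _)
    have harg : K-1-(i+1) < K-1-i := by omega
    have := node_lt_node hn (show m+1+(K-1-(i+1)) < m+1+(K-1-i) by omega)
    linarith
  obtain ⟨⟨hS2pos, hS2le⟩, _⟩ := alt_sum_bounds c2 (K-1) (hdpos _) hc2mono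
  have hKK : K - 1 + 1 = K := by omega
  set S2 := ∑ j ∈ Finset.range K, (-1:ℝ)^j * d j with hS2
  have hS2eq : ∑ k ∈ Finset.range (K-1+1), (-1:ℝ)^(K-1-k) * c2 k = S2 := by
    rw [hKK, hS2, ← Finset.sum_range_reflect (fun j => (-1:ℝ)^j * d j) K]
  rw [hS2eq] at hS2pos hS2le
  -- powers helper
  have hpow : ∀ k, k ≤ m → (-1:ℝ)^m * (-1:ℝ)^(m-k) = (-1)^k := by
    intro k hk
    have h1 : m - k + k = m := Nat.sub_add_cancel hk
    have h2 : (-1:ℝ)^(m-k) * (-1)^k = (-1)^m := by rw [← pow_add, h1]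
    calc (-1:ℝ)^m * (-1)^(m-k) = ((-1:ℝ)^(m-k) * (-1)^k) * (-1)^(m-k) := by
          rw [h2]
    _ = ((-1:ℝ)*(-1))^(m-k) * (-1)^k := by rw [mul_pow]; ring
    _ = (-1:ℝ)^k := by norm_num
  -- decomposition
  have hsplit : Dden n x = (-1:ℝ)^m * S1 + (-1:ℝ)^m * S2 := by
    have e1 : ∑ k ∈ Finset.range (m+1), (-1:ℝ)^k / (x - node n k) = (-1:ℝ)^m * S1 := by
      rw [hS1, Finset.mul_sum]
      refine Finset.sum_congr rfl (fun k hk => ?_)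
      have hk' : k ≤ m := Nat.lt_succ_iff.mp (Finset.mem_range.mp hk)
      rw [← mul_assoc, hpow k hk']
      simp only [hc]
      rw [div_eq_mul_one_div]
    have e2 : ∑ k ∈ Finset.Ico (m+1) (n+1), (-1:ℝ)^k / (x - node n k) = (-1:ℝ)^m * S2 := by
      rw [Finset.sum_Ico_eq_sum_range]
      have hcard : n + 1 - (m+1) = K := by omega
      rw [hcard, hS2, Finset.mul_sum]
      refine Finset.sum_congr rfl (fun j hj => ?_)
      have hne : x - node n (m+1+j) = -(node n (m+1+j) - x) := by ring
      rw [hne, div_neg, pow_add, pow_add]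
      simp only [hd]
      rw [div_eq_mul_one_div]
      ring
    rw [Dden, Finset.range_eq_Ico,
      ← Finset.sum_Ico_consecutive _ (by omega : 0 ≤ m+1) (by omega : m+1 ≤ n+1),
      ← Finset.range_eq_Ico, e1, e2]
  have habsD : |Dden n x| = S1 + S2 := by
    rw [hsplit, ← mul_add, abs_mul, abs_pow, abs_neg, abs_one, one_pow, one_mul,
      abs_of_pos (by linarith)]
  -- upper bound
  have hup1 : c m ≤ q * n := by
    apply inv_le_qn hqn (hsub m le_rfl)
    have := hgap m hmn.le
    rwa [abs_of_pos (hsub m le_rfl)] at this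
  have hd0 : d 0 = 1/(node n (m+1) - x) := by simp [hd]
  have hup2 : c2 (K-1) ≤ q * n := by
    have hc2top : c2 (K-1) = d 0 := by simp [hc2]
    rw [hc2top, hd0]
    apply inv_le_qn hqn (by simpa using hdsub 0)
    have := hgap (m+1) (by omega)
    rw [abs_of_neg (by linarith [hdsub 0] : x - node n (m+1) < 0)] at this
    simpa using this
  -- delta bounds
  have hdel : x - node n m < 2/n := by
    have h1 := habove (m+1) (Nat.lt_succ_self m)
    have h2 := node_succ_sub hn m
    linarith
  -- lower bound on S1
  have hlow : (n:ℝ)/4 ≤ S1 := by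
    rcases Nat.eq_zero_or_pos m with hm0 | hm0
    · have : S1 = c 0 := by rw [hS1, hm0]; simp
      rw [this]
      simp only [hc]
      have hdel0 : x - node n 0 < 2/n := by rw [hm0] at hdel; exact hdel
      exact key_frac0 h0 (hsub 0 (Nat.zero_le m)) hdel0
    · have hm1 : m - 1 + 1 = m := by omega
      have hnode : node n m = node n (m-1) + 2/n := by
        conv_lhs => rw [← hm1]
        exact node_succ_sub hn (m-1)
      have hδ0 : 0 < x - node n m := hsub m le_rfl
      have hδ1 : x - node n (m-1) = (x - node n m) + 2/n := by rw [hnode]; ring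
      have hkey : (n:ℝ)/4 ≤ c m - c (m-1) := by
        simp only [hc]
        rw [hδ1]
        exact key_frac h0 hδ0 hdel
      linarith
  have hDlow : (n:ℝ)/4 ≤ |Dden n x| := by rw [habsD]; linarith
  have hDup : |Dden n x| ≤ 2*(q*n) := by rw [habsD]; linarith
  have hne : Dden n x ≠ 0 := by
    intro h
    rw [h, abs_zero] at hDlow
    nlinarith
  exact ⟨hne, hDlow, hDup⟩
theorem affine_mem_Icc {a t u : ℝ} (ha : a ∈ Icc (-1:ℝ) 1) (ht : t ∈ Icc (-1:ℝ) 1)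
    (hu0 : 0 ≤ u) (hu1 : u ≤ 1) : (t - a)*u + a ∈ Icc (-1:ℝ) 1 := by
  obtain ⟨ha1, ha2⟩ := ha; obtain ⟨ht1, ht2⟩ := ht
  constructor <;> nlinarith

theorem pair_sum (v : ℕ → ℝ) (M : ℕ) :
    ∑ k ∈ Finset.range (2*M), (-1:ℝ)^k * v k
      = ∑ j ∈ Finset.range M, (v (2*j) - v (2*j+1)) := by
  induction M with
  | zero => simp
  | succ M ih =>
    have h2 : 2*(M+1) = 2*M + 1 + 1 := by ring
    have hpow : (-1:ℝ)^(2*M) = 1 := by rw [pow_mul]; norm_num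
    rw [h2, Finset.sum_range_succ, Finset.sum_range_succ, ih, Finset.sum_range_succ,
      pow_succ, hpow]
    ring
set_option maxHeartbeats 1000000 in
theorem Tn_small (f f' E : ℝ → ℝ) {x : ℝ} (hx : x ∈ Set.Ioo (-1:ℝ) 1)
    (hfc : ContinuousOn f (Icc (-1:ℝ) 1))
    (hf'c : ContinuousOn f' (Icc (-1:ℝ) 1))
    (hderiv : ∀ y ∈ Ioo (-1:ℝ) 1, HasDerivAt f (f' y) y)
    (hE : Integrable E volume)
    (hrep : ∀ a ∈ Icc (-1:ℝ) 1, ∀ b ∈ Icc (-1:ℝ) 1, f' b - f' a = ∫ t in a..b, E t)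
    {ε : ℝ} (hε : 0 < ε) :
    ∃ N : ℕ, ∀ n, N ≤ n → 0 < n → (¬ isNode n x) →
      |∑ k ∈ Finset.range n, (-1:ℝ)^k *
        ((f (node n k) - f x)/(x - node n k)
          - (f (node n (k+1)) - f x)/(x - node n (k+1)))| ≤ ε := by
  have hxIcc : x ∈ Icc (-1:ℝ) 1 := Ioo_subset_Icc_self hx
  set ε' : ℝ := ε/3 with hε'def
  have hε' : 0 < ε' := by positivity
  obtain ⟨ψ, hψsupp, hψsub, hψcont, hψint⟩ :=
    hE.exists_hasCompactSupport_integral_sub_le hε'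
  have hψuc : UniformContinuous ψ := hψsupp.uniformContinuous_of_continuous hψcont
  obtain ⟨δ, hδ0, hδ⟩ := Metric.uniformContinuous_iff.mp hψuc ε' hε'
  obtain ⟨Cψ, hCψ⟩ := hψsupp.exists_bound_of_continuous hψcont
  have hCψ0 : 0 ≤ Cψ := le_trans (norm_nonneg (ψ 0)) (hCψ 0)
  set w : ℝ → ℝ := fun t => E t - ψ t with hwdef
  have hw : Integrable w volume := hE.sub hψint
  obtain ⟨N, hN⟩ := exists_nat_gt (2/δ + (2*Cψ)/ε' + 1)
  refine ⟨N, fun n hNn hn hnn => ?_⟩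
  have h0 : (0:ℝ) < n := Nat.cast_pos.mpr hn
  have hNr : (2/δ + (2*Cψ)/ε' + 1) < (n:ℝ) := lt_of_lt_of_le hN (Nat.cast_le.mpr hNn)
  have hδn : 2/(n:ℝ) < δ := by
    have h1 : 2/δ < (n:ℝ) := by
      have : 0 ≤ (2*Cψ)/ε' := by positivity
      linarith
    rw [div_lt_iff₀ hδ0] at h1
    rw [div_lt_iff₀ h0]
    linarith
  have hCn : 2/(n:ℝ)*Cψ ≤ ε' := by
    have h1 : (2*Cψ)/ε' < (n:ℝ) := by
      have : 0 ≤ 2/δ := by positivity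
      linarith
    rw [div_lt_iff₀ hε'] at h1
    rw [div_mul_eq_mul_div, div_le_iff₀ h0]
    linarith
  -- FTC for f
  have hfsub : ∀ t ∈ Icc (-1:ℝ) 1, f t - f x = ∫ s in x..t, f' s := by
    intro t ht
    rcases le_total x t with h | h
    · rw [intervalIntegral.integral_eq_sub_of_hasDerivAt_of_le h
        (hfc.mono (Icc_subset_Icc hx.1.le ht.2))
        (fun s hs => hderiv s ⟨hx.1.trans hs.1, hs.2.trans_le ht.2⟩)
        (ContinuousOn.intervalIntegrable (by
          rw [uIcc_of_le h]
          exact hf'c.mono (Icc_subset_Icc hx.1.le ht.2)))]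
    · rw [intervalIntegral.integral_symm,
        intervalIntegral.integral_eq_sub_of_hasDerivAt_of_le h
        (hfc.mono (Icc_subset_Icc ht.1 hx.2.le))
        (fun s hs => hderiv s ⟨lt_of_le_of_lt ht.1 hs.1, hs.2.trans hx.2⟩)
        (ContinuousOn.intervalIntegrable (by
          rw [uIcc_of_le h]
          exact hf'c.mono (Icc_subset_Icc ht.1 hx.2.le)))]
      ring
  -- integral representation of the divided differences
  have hcontA : ∀ k ≤ n, ContinuousOn (fun u => f' ((node n k - x)*u + x)) (Icc (0:ℝ) 1) := by
    intro k hk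
    apply hf'c.comp (Continuous.continuousOn (by continuity))
    intro u hu
    exact affine_mem_Icc hxIcc (node_mem hn hk) hu.1 hu.2
  have hintk : ∀ k ≤ n, IntervalIntegrable (fun u => f' ((node n k - x)*u + x)) volume 0 1 := by
    intro k hk
    apply ContinuousOn.intervalIntegrable
    rw [uIcc_of_le (by norm_num : (0:ℝ) ≤ 1)]
    exact hcontA k hk
  have hg : ∀ k ≤ n, (f (node n k) - f x)/(x - node n k)
      = -∫ u in (0:ℝ)..1, f' ((node n k - x)*u + x) := by
    intro k hk
    have htx : x - node n k ≠ 0 := not_node hnn hk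
    have hc : node n k - x ≠ 0 := fun h => htx (by
      have := sub_eq_zero.mp h
      rw [this]; ring)
    have hsubst := intervalIntegral.integral_comp_mul_add (a := (0:ℝ)) (b := 1) f' hc x
    simp only [mul_zero, zero_add, mul_one, smul_eq_mul] at hsubst
    have hb : (node n k - x) + x = node n k := by ring
    rw [hb] at hsubst
    rw [hfsub (node n k) (node_mem hn hk), hsubst]
    rw [show x - node n k = -(node n k - x) by ring]
    rw [div_neg, div_eq_mul_inv]
    ring
  -- difference of consecutive divided differences
  have hterm : ∀ k, k < n → (f (node n k) - f x)/(x - node n k)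
        - (f (node n (k+1)) - f x)/(x - node n (k+1))
      = ∫ u in (0:ℝ)..1,
          (f' ((node n (k+1) - x)*u + x) - f' ((node n k - x)*u + x)) := by
    intro k hk
    rw [hg k hk.le, hg (k+1) hk]
    rw [intervalIntegral.integral_sub (hintk (k+1) hk) (hintk k hk.le)]
    ring
  -- exchange sum and integral
  have hT : ∑ k ∈ Finset.range n, (-1:ℝ)^k *
        ((f (node n k) - f x)/(x - node n k) - (f (node n (k+1)) - f x)/(x - node n (k+1)))
      = ∫ u in (0:ℝ)..1, ∑ k ∈ Finset.range n, (-1:ℝ)^k *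
          (f' ((node n (k+1) - x)*u + x) - f' ((node n k - x)*u + x)) := by
    rw [intervalIntegral.integral_finset_sum (fun k hk =>
      (((hintk (k+1) (Finset.mem_range.mp hk)).sub
        (hintk k (Finset.mem_range.mp hk).le)).const_mul ((-1:ℝ)^k)))]
    refine Finset.sum_congr rfl (fun k hk => ?_)
    rw [hterm k (Finset.mem_range.mp hk), intervalIntegral.integral_const_mul]
  -- pointwise bound on the inner sum
  have hW : ∀ u, 0 ≤ u → u ≤ 1 →
      |∑ k ∈ Finset.range n, (-1:ℝ)^k *
        (f' ((node n (k+1) - x)*u + x) - f' ((node n k - x)*u + x))| ≤ ε' + ε' + ε' := by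
    intro u hu0 hu1
    set A : ℕ → ℝ := fun k => (node n k - x)*u + x with hA
    have hAstep : ∀ k, A (k+1) = A k + 2/n*u := by
      intro k
      simp only [hA]
      rw [node_succ_sub hn k]
      ring
    have hAmem : ∀ k ≤ n, A k ∈ Icc (-1:ℝ) 1 := fun k hk =>
      affine_mem_Icc hxIcc (node_mem hn hk) hu0 hu1
    have hl0 : 0 ≤ 2/(n:ℝ)*u := by positivity
    have h2npos : (0:ℝ) ≤ 2/(n:ℝ) := by positivity
    have hlle : 2/(n:ℝ)*u ≤ 2/(n:ℝ) := by nlinarith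
    have hAle : ∀ k, A k ≤ A (k+1) := fun k => by rw [hAstep k]; linarith
    have hA0n : A 0 ≤ A n := by
      simp only [hA]
      rw [node_last hn, node_zero hn]
      nlinarith
    have hdiff : ∀ k, k < n → f' (A (k+1)) - f' (A k)
        = (∫ t in A k..A (k+1), ψ t) + ∫ t in A k..A (k+1), w t := by
      intro k hk
      rw [hrep (A k) (hAmem k hk.le) (A (k+1)) (hAmem (k+1) hk)]
      rw [← intervalIntegral.integral_add (hψcont.intervalIntegrable _ _)
        (hw.intervalIntegrable)]
      apply intervalIntegral.integral_congr
      intro t _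
      simp only [hwdef]
      ring
    have hsum : ∑ k ∈ Finset.range n, (-1:ℝ)^k * (f' (A (k+1)) - f' (A k))
        = (∑ k ∈ Finset.range n, (-1:ℝ)^k * ∫ t in A k..A (k+1), ψ t)
          + ∑ k ∈ Finset.range n, (-1:ℝ)^k * ∫ t in A k..A (k+1), w t := by
      rw [← Finset.sum_add_distrib]
      refine Finset.sum_congr rfl (fun k hk => ?_)
      rw [hdiff k (Finset.mem_range.mp hk)]
      ring
    -- the (E - ψ) part
    have hQ : |∑ k ∈ Finset.range n, (-1:ℝ)^k * ∫ t in A k..A (k+1), w t| ≤ ε' := by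
      have h1 : ∀ k ∈ Finset.range n, |(-1:ℝ)^k * ∫ t in A k..A (k+1), w t|
          ≤ ∫ t in A k..A (k+1), |w t| := by
        intro k _
        rw [abs_mul, abs_pow, abs_neg, abs_one, one_pow, one_mul]
        exact intervalIntegral.abs_integral_le_integral_abs (hAle k)
      calc |∑ k ∈ Finset.range n, (-1:ℝ)^k * ∫ t in A k..A (k+1), w t|
          ≤ ∑ k ∈ Finset.range n, |(-1:ℝ)^k * ∫ t in A k..A (k+1), w t| :=
            Finset.abs_sum_le_sum_abs _ _
      _ ≤ ∑ k ∈ Finset.range n, ∫ t in A k..A (k+1), |w t| := Finset.sum_le_sum h1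
      _ = ∫ t in (A 0)..(A n), |w t| :=
            intervalIntegral.sum_integral_adjacent_intervals
              (fun k _ => hw.abs.intervalIntegrable)
      _ ≤ ∫ t, |w t| := by
            rw [intervalIntegral.integral_of_le hA0n]
            exact setIntegral_le_integral hw.abs
              (Eventually.of_forall (fun t => abs_nonneg _))
      _ ≤ ε' := by simpa [Real.norm_eq_abs] using hψsub
    -- the ψ part
    set v : ℕ → ℝ := fun k => ∫ t in A k..A (k+1), ψ t with hv
    have hpair : ∀ j : ℕ, |v (2*j) - v (2*j+1)| ≤ ε' * (2/n*u) := by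
      intro j
      have e1 : v (2*j+1) = ∫ t in A (2*j)..A (2*j+1), ψ (t + 2/n*u) := by
        simp only [hv]
        rw [intervalIntegral.integral_comp_add_right ψ (2/(n:ℝ)*u)]
        rw [← hAstep (2*j), ← hAstep (2*j+1)]
      have hcomp : Continuous (fun t : ℝ => ψ (t + 2/(n:ℝ)*u)) :=
        hψcont.comp (continuous_add_right _)
      have e2 : v (2*j) - v (2*j+1)
          = ∫ t in A (2*j)..A (2*j+1), (ψ t - ψ (t + 2/n*u)) := by
        rw [e1]
        simp only [hv]
        rw [intervalIntegral.integral_sub (hψcont.intervalIntegrable _ _)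
          (hcomp.intervalIntegrable _ _)]
      rw [e2]
      have hb := intervalIntegral.norm_integral_le_of_norm_le_const
        (C := ε') (f := fun t => ψ t - ψ (t + 2/n*u)) (a := A (2*j)) (b := A (2*j+1)) ?_
      · rw [Real.norm_eq_abs] at hb
        refine le_trans hb (le_of_eq ?_)
        rw [hAstep (2*j)]
        rw [show A (2*j) + 2/(n:ℝ)*u - A (2*j) = 2/(n:ℝ)*u by ring, abs_of_nonneg hl0]
      · intro t _
        rw [Real.norm_eq_abs, ← Real.dist_eq]
        apply le_of_lt
        apply hδ
        rw [Real.dist_eq, show t - (t + 2/(n:ℝ)*u) = -(2/(n:ℝ)*u) by ring, abs_neg,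
          abs_of_nonneg hl0]
        exact lt_of_le_of_lt hlle hδn
    have hMbound : ∀ M : ℕ, 2*M ≤ n →
        |∑ j ∈ Finset.range M, (v (2*j) - v (2*j+1))| ≤ ε' := by
      intro M hM
      have hMr : 2*(M:ℝ) ≤ n := by exact_mod_cast hM
      calc |∑ j ∈ Finset.range M, (v (2*j) - v (2*j+1))|
          ≤ ∑ j ∈ Finset.range M, |v (2*j) - v (2*j+1)| := Finset.abs_sum_le_sum_abs _ _
      _ ≤ ∑ _j ∈ Finset.range M, ε' * (2/n*u) := Finset.sum_le_sum (fun j _ => hpair j)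
      _ = M * (ε' * (2/n*u)) := by rw [Finset.sum_const, Finset.card_range]; ring
      _ ≤ ε' := by
          have hinv : 0 < ((n:ℝ))⁻¹ := by positivity
          have e : (M:ℝ) * (ε' * (2/n*u)) = ε' * (2*M*u) * (n:ℝ)⁻¹ := by
            field_simp
          rw [e]
          have h1 : ε' * (2*M*u) ≤ ε' * n := by
            apply mul_le_mul_of_nonneg_left _ hε'.le
            nlinarith
          calc ε' * (2*(M:ℝ)*u) * (n:ℝ)⁻¹ ≤ ε' * n * (n:ℝ)⁻¹ :=
                mul_le_mul_of_nonneg_right h1 hinv.le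
          _ = ε' := by field_simp
    have hleft : ∀ k, |v k| ≤ Cψ * (2/n*u) := by
      intro k
      have hb := intervalIntegral.norm_integral_le_of_norm_le_const
        (C := Cψ) (f := ψ) (a := A k) (b := A (k+1)) (fun t _ => hCψ t)
      rw [Real.norm_eq_abs] at hb
      refine le_trans hb (le_of_eq ?_)
      rw [hAstep k, show A k + 2/(n:ℝ)*u - A k = 2/(n:ℝ)*u by ring, abs_of_nonneg hl0]
    have hP : |∑ k ∈ Finset.range n, (-1:ℝ)^k * v k| ≤ ε' + ε' := by
      rcases Nat.even_or_odd n with ⟨M, hM⟩ | ⟨M, hM⟩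
      · have hM2 : n = 2*M := by omega
        rw [hM2, pair_sum]
        have := hMbound M (by omega)
        linarith
      · have hM2 : n = 2*M + 1 := hM
        rw [hM2, Finset.sum_range_succ, pair_sum]
        have h1 := hMbound M (by omega)
        have hpow : (-1:ℝ)^(2*M) = 1 := by rw [pow_mul]; norm_num
        rw [hpow, one_mul]
        have h2 : |v (2*M)| ≤ ε' := by
          refine le_trans (hleft (2*M)) ?_
          calc Cψ * (2/n*u) ≤ Cψ * (2/n) := by nlinarith
          _ = 2/(n:ℝ)*Cψ := by ring
          _ ≤ ε' := hCn
        calc |∑ j ∈ Finset.range M, (v (2*j) - v (2*j+1)) + v (2*M)|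
            ≤ |∑ j ∈ Finset.range M, (v (2*j) - v (2*j+1))| + |v (2*M)| := abs_add_le _ _
        _ ≤ ε' + ε' := add_le_add h1 h2
    -- combine
    rw [hsum]
    calc |(∑ k ∈ Finset.range n, (-1:ℝ)^k * ∫ t in A k..A (k+1), ψ t)
          + ∑ k ∈ Finset.range n, (-1:ℝ)^k * ∫ t in A k..A (k+1), w t|
        ≤ |∑ k ∈ Finset.range n, (-1:ℝ)^k * ∫ t in A k..A (k+1), ψ t|
          + |∑ k ∈ Finset.range n, (-1:ℝ)^k * ∫ t in A k..A (k+1), w t| := abs_add_le _ _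
    _ ≤ (ε' + ε') + ε' := add_le_add hP hQ
    _ = ε' + ε' + ε' := by ring
  -- conclude
  rw [hT]
  have hb := intervalIntegral.norm_integral_le_of_norm_le_const
    (C := ε' + ε' + ε')
    (f := fun u => ∑ k ∈ Finset.range n, (-1:ℝ)^k *
      (f' ((node n (k+1) - x)*u + x) - f' ((node n k - x)*u + x)))
    (a := (0:ℝ)) (b := 1) ?_
  · rw [Real.norm_eq_abs] at hb
    refine le_trans hb (le_of_eq ?_)
    rw [hε'def]
    norm_num
    ring
  · intro u hu
    rw [Set.uIoc_of_le (by norm_num : (0:ℝ) ≤ 1)] at hu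
    rw [Real.norm_eq_abs]
    exact hW u hu.1.le hu.2

theorem numer_eq (f : ℝ → ℝ) (n : ℕ) (x : ℝ) :
    Nnum f n x - f x * Dden n x
      = ∑ k ∈ Finset.range (n+1), (-1:ℝ)^k * ((f (node n k) - f x)/(x - node n k)) := by
  rw [Nnum, Dden, Finset.mul_sum, ← Finset.sum_sub_distrib]
  exact Finset.sum_congr rfl (fun k _ => by ring)

theorem statement7' (f : ℝ → ℝ) (hf : AC1 f) (x : ℝ) (hx : x ∈ Set.Ioo (-1 : ℝ) 1)
    (hrat : ∃ r : ℚ, x = (r : ℝ)) (n : ℕ → ℕ) (hmono : StrictMono n)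
    (hpos : ∀ j, 0 < n j) (hreg : Regular n x)
    (hO : Ofun f x ≠ 0) (hE : Efun f x ≠ 0) :
    0 < Filter.liminf
      (fun j : ℕ => (n j : ℝ) * |berrut f (n j) x - f x|) Filter.atTop := by
  classical
  obtain ⟨r, hxr⟩ := hrat
  obtain ⟨f', hderiv, g₀, hg₀int, hrep₀⟩ := hf
  obtain ⟨j₀, hj₀⟩ := hreg
  -- the integrable extension of the second derivative
  set E : ℝ → ℝ := (Set.Ioc (-1:ℝ) 1).indicator g₀ with hEdef
  have hg₀Ioc : IntegrableOn g₀ (Set.Ioc (-1:ℝ) 1) volume := hg₀int.1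
  have hEint : Integrable E volume := hg₀Ioc.integrable_indicator measurableSet_Ioc
  have hEeq : ∀ y ∈ Icc (-1:ℝ) 1, (∫ t in (-1:ℝ)..y, E t) = ∫ t in (-1:ℝ)..y, g₀ t := by
    intro y hy
    rw [intervalIntegral.integral_of_le hy.1, intervalIntegral.integral_of_le hy.1]
    apply setIntegral_congr_fun measurableSet_Ioc
    intro t ht
    simp only [hEdef]
    exact Set.indicator_of_mem (α := ℝ) (M := ℝ)
      (⟨ht.1, le_trans ht.2 hy.2⟩ : t ∈ Set.Ioc (-1:ℝ) 1) g₀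
  have hrep : ∀ a ∈ Icc (-1:ℝ) 1, ∀ b ∈ Icc (-1:ℝ) 1, f' b - f' a = ∫ t in a..b, E t := by
    intro a ha b hb
    rw [hrep₀ b hb, hrep₀ a ha, ← hEeq b hb, ← hEeq a ha]
    have h2 := intervalIntegral.integral_interval_sub_left
      (μ := volume) (f := E) (a := (-1:ℝ)) (b := b) (c := a)
      hEint.intervalIntegrable hEint.intervalIntegrable
    rw [← h2]
    ring
  have hfc : ContinuousOn f (Icc (-1:ℝ) 1) :=
    fun y hy => (hderiv y hy).continuousWithinAt
  have hderiv' : ∀ y ∈ Ioo (-1:ℝ) 1, HasDerivAt f (f' y) y :=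
    fun y hy => (hderiv y (Ioo_subset_Icc_self hy)).hasDerivAt (Icc_mem_nhds hy.1 hy.2)
  have hf'c : ContinuousOn f' (Icc (-1:ℝ) 1) := by
    have hcont : Continuous (fun y => f' (-1) + ∫ t in (-1:ℝ)..y, E t) :=
      continuous_const.add
        (intervalIntegral.continuous_primitive (fun a b => hEint.intervalIntegrable) (-1))
    apply ContinuousOn.congr hcont.continuousOn
    intro y hy
    rw [hrep₀ y hy, ← hEeq y hy]
  -- constants
  set c0 : ℝ := min |Ofun f x| |Efun f x| with hc0def
  have hc0 : 0 < c0 := lt_min (abs_pos.mpr hO) (abs_pos.mpr hE)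
  set C1 : ℝ := max |Ofun f x| |Efun f x| + c0/4 with hC1def
  have hC1 : 0 < C1 := by
    have : 0 < max |Ofun f x| |Efun f x| := lt_max_of_lt_left (abs_pos.mpr hO)
    positivity
  set q : ℝ := (r.den : ℝ) with hqdef
  have hq : 0 < q := by
    simp only [hqdef]
    exact_mod_cast r.pos
  obtain ⟨N, hTN⟩ := Tn_small f f' E hx hfc hf'c hderiv' hEint hrep
    (show (0:ℝ) < c0/2 by positivity)
  -- main eventual estimate
  have hkey : ∀ j, max j₀ N ≤ j →
      c0/(4*q) ≤ (n j : ℝ) * |berrut f (n j) x - f x| ∧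
        (n j : ℝ) * |berrut f (n j) x - f x| ≤ 4*C1 := by
    intro j hj
    set m : ℕ := n j with hmdef
    have hm : 0 < m := hpos j
    have hmr : (0:ℝ) < m := Nat.cast_pos.mpr hm
    have hnn : ¬ isNode m x := hj₀ j (le_trans (le_max_left _ _) hj)
    have hmN : N ≤ m := le_trans (le_trans (le_max_right _ _) hj) hmono.le_apply
    have hT := hTN m hmN hm hnn
    have hgap : ∀ k ≤ m, 1/(q*m) ≤ |x - node m k| := fun k hk => gap hm hxr hnn hk
    obtain ⟨hD0, hDlow, hDup⟩ := Dden_bounds hm hx hnn hq hgap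
    -- the numerator
    set T : ℝ := ∑ k ∈ Finset.range m, (-1:ℝ)^k *
        ((f (node m k) - f x)/(x - node m k)
          - (f (node m (k+1)) - f x)/(x - node m (k+1))) with hTdef
    set B : ℝ := (((f (-1:ℝ)) - f x)/(x - -1) + (-1:ℝ)^m * ((f 1 - f x)/(x - 1)))/2
      with hBdef
    have hSval : Nnum f m x - f x * Dden m x = B + (1/2) * T := by
      have habel : ∑ k ∈ Finset.range (m+1), (-1:ℝ)^k * ((f (node m k) - f x)/(x - node m k))
          = (((f (node m 0) - f x)/(x - node m 0))
              + (-1:ℝ)^m * ((f (node m m) - f x)/(x - node m m)))/2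
            + (1/2) * T :=
        abel_sum (fun k => (f (node m k) - f x)/(x - node m k)) m
      rw [numer_eq, habel, node_zero hm, node_last hm, hBdef]
    have hBval : B = Efun f x ∨ B = Ofun f x := by
      rcases Nat.even_or_odd m with hpar | hpar
      · left
        rw [hBdef, hpar.neg_one_pow, Efun, sub_neg_eq_add]
        have hx1 : x - 1 ≠ 0 := sub_ne_zero.mpr (ne_of_lt hx.2)
        have hx2 : x + 1 ≠ 0 := by have := hx.1; intro h; linarith
        field_simp
        ring
      · right
        rw [hBdef, hpar.neg_one_pow, Ofun, sub_neg_eq_add]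
        have hx1 : x - 1 ≠ 0 := sub_ne_zero.mpr (ne_of_lt hx.2)
        have hx2 : x + 1 ≠ 0 := by have := hx.1; intro h; linarith
        field_simp
        ring
    have hBabs : c0 ≤ |B| := by
      rcases hBval with h | h <;> rw [h]
      · exact le_trans (min_le_right _ _) le_rfl
      · exact le_trans (min_le_left _ _) le_rfl
    have hBabs' : |B| ≤ max |Ofun f x| |Efun f x| := by
      rcases hBval with h | h <;> rw [h]
      · exact le_max_right _ _
      · exact le_max_left _ _
    set S : ℝ := Nnum f m x - f x * Dden m x with hSdef
    have hSB : |B| ≤ |S| + |T|/2 := by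
      have : B = S - (1/2)*T := by rw [hSval]; ring
      calc |B| = |S - (1/2)*T| := by rw [this]
      _ ≤ |S| + |(1/2)*T| := abs_sub _ _
      _ = |S| + |T|/2 := by
            rw [abs_mul, abs_of_pos (by norm_num : (0:ℝ) < 1/2)]
            ring
    have hSlow : c0/2 ≤ |S| := by
      have h1 : |T|/2 ≤ c0/4 := by linarith
      linarith
    have hSup : |S| ≤ C1 := by
      have : |S| ≤ |B| + |(1/2)*T| := by
        rw [hSval]
        exact abs_add_le _ _
      rw [abs_mul] at this
      have h2 : |(1:ℝ)/2| * |T| ≤ c0/4 := by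
        rw [abs_of_pos (by norm_num : (0:ℝ) < (1:ℝ)/2)]
        linarith
      rw [hC1def]
      linarith
    -- berrut value
    have hber : berrut f m x = Nnum f m x / Dden m x := if_neg hnn
    have hquot : berrut f m x - f x = S / Dden m x := by
      rw [hber, hSdef, eq_div_iff hD0, sub_mul, div_mul_cancel₀ _ hD0]
    have hDpos : 0 < |Dden m x| := lt_of_lt_of_le (by positivity) hDlow
    have habsq : (m:ℝ) * |berrut f m x - f x| = (m:ℝ) * (|S| / |Dden m x|) := by
      rw [hquot, abs_div]
    constructor
    · rw [habsq]
      have h1 : (c0/2)/(2*(q*(m:ℝ))) ≤ |S| / |Dden m x| :=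
        div_le_div₀ (abs_nonneg S) hSlow hDpos hDup
      have h2 : (m:ℝ) * ((c0/2)/(2*(q*(m:ℝ)))) = c0/(4*q) := by
        field_simp
        ring
      calc c0/(4*q) = (m:ℝ) * ((c0/2)/(2*(q*(m:ℝ)))) := h2.symm
      _ ≤ (m:ℝ) * (|S| / |Dden m x|) := mul_le_mul_of_nonneg_left h1 hmr.le
    · rw [habsq]
      have h1 : |S| / |Dden m x| ≤ C1 / ((m:ℝ)/4) :=
        div_le_div₀ hC1.le hSup (by positivity) hDlow
      have h2 : (m:ℝ) * (C1 / ((m:ℝ)/4)) = 4*C1 := by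
        field_simp
      calc (m:ℝ) * (|S| / |Dden m x|) ≤ (m:ℝ) * (C1 / ((m:ℝ)/4)) :=
            mul_le_mul_of_nonneg_left h1 hmr.le
      _ = 4*C1 := h2
  -- conclude via liminf
  have hLpos : (0:ℝ) < c0/(4*q) := by positivity
  have hev_low : ∀ᶠ j in atTop, c0/(4*q) ≤ (n j:ℝ) * |berrut f (n j) x - f x| :=
    Filter.eventually_atTop.mpr ⟨max j₀ N, fun j hj => (hkey j hj).1⟩
  have hev_up : ∀ᶠ j in atTop, (n j:ℝ) * |berrut f (n j) x - f x| ≤ 4*C1 :=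
    Filter.eventually_atTop.mpr ⟨max j₀ N, fun j hj => (hkey j hj).2⟩
  have hcob : Filter.IsCoboundedUnder (· ≥ ·) Filter.atTop
      (fun j : ℕ => (n j:ℝ) * |berrut f (n j) x - f x|) :=
    Filter.isCoboundedUnder_ge_of_eventually_le Filter.atTop hev_up
  exact lt_of_lt_of_le hLpos (Filter.le_liminf_of_le hcob hev_low)

end Aux

/-- for `f ∈ AC¹` and rational `x ∈ (-1,1)` regular for `(n_j)`, if
`O(f,x) ≠ 0` and `E(f,x) ≠ 0` then `liminf n_j |B_{n_j}(f,x) - f(x)| > 0`. -/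
theorem statement7 (f : ℝ → ℝ) (hf : AC1 f) (x : ℝ) (hx : x ∈ Set.Ioo (-1 : ℝ) 1)
    (hrat : ∃ r : ℚ, x = (r : ℝ)) (n : ℕ → ℕ) (hmono : StrictMono n)
    (hpos : ∀ j, 0 < n j) (hreg : Regular n x)
    (hO : Ofun f x ≠ 0) (hE : Efun f x ≠ 0) :
    0 < Filter.liminf
      (fun j : ℕ => (n j : ℝ) * |berrut f (n j) x - f x|) Filter.atTop := by
  exact statement7' f hf x hx hrat n hmono hpos hreg hO hE
end

section
/- Let a, b ∈ ℝ with a < b, and let f : [a,b] → ℝ be continuous on [a,b] and differentiable on (a,b). If c and ξ_c satisfy a < ξ_c < c < b and f'(ξ_c) = (f(c) − f(a))/(c − a), then there exists ξ_b ∈ [ξ_c, b) such that f'(ξ_b) = (f(b) − f(a))/(b − a). -/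
open Filter Set MeasureTheory

/-- a monotone Mean Value Theorem. -/
theorem statement18 (a b c ξc : ℝ) (f f' : ℝ → ℝ) (hab : a < b)
    (hcont : ContinuousOn f (Set.Icc a b))
    (hderiv : ∀ x ∈ Set.Ioo a b, HasDerivAt f (f' x) x)
    (h1 : a < ξc) (h2 : ξc < c) (h3 : c < b)
    (hξc : f' ξc = (f c - f a) / (c - a)) :
    ∃ ξb ∈ Set.Ico ξc b, f' ξb = (f b - f a) / (b - a) := by
  set M : ℝ := (f b - f a) / (b - a) with hM
  have hξcb : ξc < b := h2.trans h3
  have hca : (0:ℝ) < c - a := by linarith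
  have hbc : (0:ℝ) < b - c := by linarith
  have hba : (0:ℝ) < b - a := by linarith
  have hfc : f c - f a = f' ξc * (c - a) := by
    rw [hξc]; field_simp
  have hfb : f b - f a = M * (b - a) := by
    rw [hM]; field_simp
  -- MVT on [c, b]
  obtain ⟨ξ, hξmem, hξ⟩ := exists_hasDerivAt_eq_slope f f' h3
    (hcont.mono (Set.Icc_subset_Icc (le_of_lt (h1.trans h2)) le_rfl))
    (fun x hx => hderiv x ⟨(h1.trans h2).trans hx.1, hx.2⟩)
  have hsub : Set.Icc ξc ξ ⊆ Set.Ioo a b :=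
    fun x hx => ⟨lt_of_lt_of_le h1 hx.1, lt_of_le_of_lt hx.2 hξmem.2⟩
  have hderiv' : ∀ x ∈ Set.Icc ξc ξ, HasDerivWithinAt f (f' x) (Set.Icc ξc ξ) x :=
    fun x hx => (hderiv x (hsub hx)).hasDerivWithinAt
  have hξle : ξc ≤ ξ := le_of_lt (h2.trans hξmem.1)
  rcases lt_trichotomy (f' ξc) M with h | h | h
  · -- slope on [c,b] exceeds M
    have hgt : M < f' ξ := by
      rw [hξ]
      rw [lt_div_iff₀ hbc]
      nlinarith
    obtain ⟨η, hηmem, hη⟩ := exists_hasDerivWithinAt_eq_of_gt_of_lt hξle hderiv' h hgt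
    exact ⟨η, ⟨le_of_lt hηmem.1, lt_of_lt_of_le hηmem.2 (le_of_lt hξmem.2)⟩, hη⟩
  · exact ⟨ξc, ⟨le_rfl, hξcb⟩, h⟩
  · have hlt : f' ξ < M := by
      rw [hξ]
      rw [div_lt_iff₀ hbc]
      nlinarith
    obtain ⟨η, hηmem, hη⟩ := exists_hasDerivWithinAt_eq_of_lt_of_gt hξle hderiv' h hlt
    exact ⟨η, ⟨le_of_lt hηmem.1, lt_of_lt_of_le hηmem.2 (le_of_lt hξmem.2)⟩, hη⟩
end
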